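/- A bounded operator T on a Hilbert space H can be written as T = XY with X an invertible bounded operator on H and Y a partial isometry on H if and only if T has closed range. -/

import Mathlib

open ContinuousLinearMap

/-- 2×2 block operator matrix `[[A, B],[C, D]] : X ⊕ Y → X' ⊕ Y'`. -/
noncomputable def blk {X Y X' Y' : Type*} [NormedAddCommGroup X] [NormedSpace ℝ X]
    [NormedAddCommGroup Y] [NormedSpace ℝ Y] [NormedAddCommGroup X'] [NormedSpace ℝ X']
    [NormedAddCommGroup Y'] [NormedSpace ℝ Y']
    (A : X →L[ℝ] X') (B : Y →L[ℝ] X') (C : X →L[ℝ] Y') (D : Y →L[ℝ] Y') :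
    (X × Y) →L[ℝ] (X' × Y') :=
  (A.coprod B).prod (C.coprod D)

section blocks
variable {X Y X' Y' : Type*} [NormedAddCommGroup X] [NormedSpace ℝ X]
    [NormedAddCommGroup Y] [NormedSpace ℝ Y] [NormedAddCommGroup X'] [NormedSpace ℝ X']
    [NormedAddCommGroup Y'] [NormedSpace ℝ Y']

/-- (1,1)-entry of a block operator. -/
noncomputable def b11 (T : (X × Y) →L[ℝ] (X' × Y')) : X →L[ℝ] X' :=
  (ContinuousLinearMap.fst ℝ X' Y').comp (T.comp (ContinuousLinearMap.inl ℝ X Y))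

/-- (1,2)-entry of a block operator. -/
noncomputable def b12 (T : (X × Y) →L[ℝ] (X' × Y')) : Y →L[ℝ] X' :=
  (ContinuousLinearMap.fst ℝ X' Y').comp (T.comp (ContinuousLinearMap.inr ℝ X Y))

/-- (2,1)-entry of a block operator. -/
noncomputable def b21 (T : (X × Y) →L[ℝ] (X' × Y')) : X →L[ℝ] Y' :=
  (ContinuousLinearMap.snd ℝ X' Y').comp (T.comp (ContinuousLinearMap.inl ℝ X Y))

/-- (2,2)-entry of a block operator. -/
noncomputable def b22 (T : (X × Y) →L[ℝ] (X' × Y')) : Y →L[ℝ] Y' :=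
  (ContinuousLinearMap.snd ℝ X' Y').comp (T.comp (ContinuousLinearMap.inr ℝ X Y))

end blocks

open scoped RealInnerProductSpace

set_option maxHeartbeats 1000000
set_option synthInstance.maxHeartbeats 400000

section auxvarsec
variable {E : Type*} [NormedAddCommGroup E] [InnerProductSpace ℝ E] [CompleteSpace E]

/-- A selfadjoint operator whose quadratic form is bounded by `r * ‖x‖²` has norm at most `r`. -/
lemma sa_norm_le_of_form (A : E →L[ℝ] E) (hA : IsSelfAdjoint A) {r : ℝ} (hr : 0 ≤ r)
    (h : ∀ x, |⟪A x, x⟫| ≤ r * ‖x‖ ^ 2) : ‖A‖ ≤ r := by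
  refine A.opNorm_le_bound hr fun x => ?_
  rcases eq_or_ne (A x) 0 with h0 | h0
  · simpa [h0] using mul_nonneg hr (norm_nonneg x)
  rcases eq_or_ne x 0 with rfl | hx0
  · simp
  have hAx : (0:ℝ) < ‖A x‖ := norm_pos_iff.mpr h0
  have hx : (0:ℝ) < ‖x‖ := norm_pos_iff.mpr hx0
  set y := (‖x‖ / ‖A x‖) • A x with hy
  have hsym := hA.isSymmetric
  have hny : ‖y‖ = ‖x‖ := by
    rw [hy, norm_smul, Real.norm_eq_abs, abs_of_nonneg (by positivity), div_mul_cancel₀]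
    exact hAx.ne'
  have hin : ⟪A x, y⟫ = ‖x‖ * ‖A x‖ := by
    rw [hy, real_inner_smul_right, real_inner_self_eq_norm_sq]
    field_simp
  have e1 : ⟪A (x + y), x + y⟫ = ⟪A x, x⟫ + 2 * ⟪A x, y⟫ + ⟪A y, y⟫ := by
    have h1 : ⟪A y, x⟫ = ⟪A x, y⟫ :=
      (hsym y x).trans (real_inner_comm _ _)
    simp only [map_add, inner_add_left, inner_add_right]
    linarith
  have e2 : ⟪A (x - y), x - y⟫ = ⟪A x, x⟫ - 2 * ⟪A x, y⟫ + ⟪A y, y⟫ := by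
    have h1 : ⟪A y, x⟫ = ⟪A x, y⟫ :=
      (hsym y x).trans (real_inner_comm _ _)
    simp only [map_sub, inner_sub_left, inner_sub_right]
    linarith
  have par : ‖x + y‖ ^ 2 + ‖x - y‖ ^ 2 = 2 * (‖x‖ ^ 2 + ‖y‖ ^ 2) := by
    have := parallelogram_law_with_norm ℝ x y
    nlinarith [this]
  have hb1 := h (x + y)
  have hb2 := h (x - y)
  have key : 4 * (‖x‖ * ‖A x‖) ≤ 4 * (r * ‖x‖ ^ 2) := by
    have h4 : 4 * ⟪A x, y⟫ = ⟪A (x + y), x + y⟫ - ⟪A (x - y), x - y⟫ := by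
      rw [e1, e2]; ring
    have : 4 * ⟪A x, y⟫ ≤ r * ‖x + y‖ ^ 2 + r * ‖x - y‖ ^ 2 := by
      rw [h4]
      have l1 : ⟪A (x + y), x + y⟫ ≤ r * ‖x + y‖ ^ 2 := (abs_le.mp hb1).2
      have l2 : -(r * ‖x - y‖ ^ 2) ≤ ⟪A (x - y), x - y⟫ := (abs_le.mp hb2).1
      linarith
    rw [hin] at this
    calc 4 * (‖x‖ * ‖A x‖) ≤ r * ‖x + y‖ ^ 2 + r * ‖x - y‖ ^ 2 := by linarith
      _ = r * (‖x + y‖ ^ 2 + ‖x - y‖ ^ 2) := by ring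
      _ = r * (2 * (‖x‖ ^ 2 + ‖y‖ ^ 2)) := by rw [par]
      _ = 4 * (r * ‖x‖ ^ 2) := by rw [hny]; ring
  have : ‖x‖ * ‖A x‖ ≤ r * ‖x‖ ^ 2 := by linarith
  calc ‖A x‖ = ‖x‖ * ‖A x‖ / ‖x‖ := by field_simp
    _ ≤ r * ‖x‖ ^ 2 / ‖x‖ := by gcongr
    _ = r * ‖x‖ := by field_simp

/-- Every coercive selfadjoint operator on a real Hilbert space has a selfadjoint square root. -/
lemma exists_sa_sq_eq (G : E →L[ℝ] E) (hG : IsSelfAdjoint G) {c : ℝ} (hc : 0 < c)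
    (hco : ∀ x, c * ‖x‖ ^ 2 ≤ ⟪G x, x⟫) :
    ∃ B : E →L[ℝ] E, IsSelfAdjoint B ∧ B * B = G := by
  set t : ℝ := ‖G‖ + 1 with ht
  have ht0 : (0:ℝ) < t := by positivity
  set a : E →L[ℝ] E := t⁻¹ • G with ha
  set x0 : E →L[ℝ] E := 1 - a with hx0def
  have hx0sa : IsSelfAdjoint x0 :=
    (IsSelfAdjoint.one (E →L[ℝ] E)).sub (IsSelfAdjoint.smul (star_trivial _) hG)
  set q : ℝ := max 0 (1 - c / t) with hq
  have hq0 : (0:ℝ) ≤ q := le_max_left _ _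
  have hq1 : q < 1 := by
    apply max_lt one_pos
    have : 0 < c / t := div_pos hc ht0
    linarith
  have hx0_form : ∀ x, |⟪x0 x, x⟫| ≤ q * ‖x‖ ^ 2 := by
    intro x
    have h1 : ⟪x0 x, x⟫ = ‖x‖ ^ 2 - t⁻¹ * ⟪G x, x⟫ := by
      simp [hx0def, ha, ContinuousLinearMap.sub_apply, ContinuousLinearMap.one_apply,
        ContinuousLinearMap.smul_apply, inner_sub_left, real_inner_smul_left,
        real_inner_self_eq_norm_sq]
    have hGx_le : ⟪G x, x⟫ ≤ ‖G‖ * ‖x‖ ^ 2 := by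
      calc ⟪G x, x⟫ ≤ ‖G x‖ * ‖x‖ := real_inner_le_norm _ _
        _ ≤ ‖G‖ * ‖x‖ * ‖x‖ := by
            have := G.le_opNorm x
            nlinarith [norm_nonneg x]
        _ = ‖G‖ * ‖x‖ ^ 2 := by ring
    have hGx_ge := hco x
    have htinv : (0:ℝ) < t⁻¹ := inv_pos.mpr ht0
    have hnn : (0:ℝ) ≤ ‖x‖ ^ 2 := by positivity
    rw [abs_le]
    constructor
    · -- lower bound: the form is nonnegative
      have hup : t⁻¹ * ⟪G x, x⟫ ≤ t⁻¹ * (‖G‖ * ‖x‖ ^ 2) := by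
        exact mul_le_mul_of_nonneg_left hGx_le htinv.le
      have hGt : t⁻¹ * ‖G‖ ≤ 1 := by
        rw [inv_mul_le_iff₀ ht0]
        simp [ht]
      nlinarith
    · have hlow : t⁻¹ * (c * ‖x‖ ^ 2) ≤ t⁻¹ * ⟪G x, x⟫ :=
        mul_le_mul_of_nonneg_left hGx_ge htinv.le
      have hqq : 1 - c / t ≤ q := le_max_right _ _
      have : ‖x‖ ^ 2 - t⁻¹ * ⟪G x, x⟫ ≤ (1 - c / t) * ‖x‖ ^ 2 := by
        rw [div_eq_inv_mul]
        nlinarith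
      calc ⟪x0 x, x⟫ ≤ (1 - c / t) * ‖x‖ ^ 2 := by rw [h1]; exact this
        _ ≤ q * ‖x‖ ^ 2 := by nlinarith
  have hx0norm : ‖x0‖ ≤ q := sa_norm_le_of_form x0 hx0sa hq0 hx0_form
  -- the closed set on which we run the fixed point argument
  set s : Set (E →L[ℝ] E) := {F | ‖F‖ ≤ q} ∩ {F | IsSelfAdjoint F} with hs
  have hs_closed : IsClosed s := by
    apply IsClosed.inter
    · exact isClosed_le continuous_norm continuous_const
    · have : {F : E →L[ℝ] E | IsSelfAdjoint F} =
          {F : E →L[ℝ] E | ContinuousLinearMap.adjoint F = F} := by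
        ext F
        exact ContinuousLinearMap.isSelfAdjoint_iff'
      rw [this]
      exact isClosed_eq (ContinuousLinearMap.adjoint : (E →L[ℝ] E) ≃ₗᵢ⋆[ℝ]
        (E →L[ℝ] E)).continuous continuous_id
  haveI : CompleteSpace s := hs_closed.completeSpace_coe
  haveI : Nonempty s := ⟨⟨0, by simp [hs, hq0], by simp [hs]⟩⟩
  have hmem : ∀ F : s, ‖(F : E →L[ℝ] E)‖ ≤ q := fun F => F.2.1
  have hmemsa : ∀ F : s, IsSelfAdjoint (F : E →L[ℝ] E) := fun F => F.2.2
  have hnorm_smul_half : ∀ z : E →L[ℝ] E, ‖(2⁻¹ : ℝ) • z‖ = 2⁻¹ * ‖z‖ := by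
    intro z
    rw [norm_smul (2⁻¹:ℝ) z, Real.norm_eq_abs]
    norm_num
  have hΦmem : ∀ F : s, (2⁻¹ : ℝ) • (x0 + (F : E →L[ℝ] E) * (F : E →L[ℝ] E)) ∈ s := by
    intro F
    have hFn := hmem F
    have hFsa := hmemsa F
    constructor
    · show ‖_‖ ≤ q
      rw [hnorm_smul_half]
      have h2 : ‖x0 + (F : E →L[ℝ] E) * F‖ ≤ q + q * q := by
        have hmul := norm_mul_le (F : E →L[ℝ] E) (F : E →L[ℝ] E)
        have h3 : ‖(F : E →L[ℝ] E)‖ * ‖(F : E →L[ℝ] E)‖ ≤ q * q := by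
          nlinarith [norm_nonneg (F : E →L[ℝ] E)]
        have h4 := norm_add_le x0 ((F : E →L[ℝ] E) * F)
        linarith
      nlinarith
    · show IsSelfAdjoint _
      have hFF : IsSelfAdjoint ((F : E →L[ℝ] E) * F) := by
        rw [IsSelfAdjoint, star_mul, hFsa.star_eq]
      exact IsSelfAdjoint.smul (star_trivial _) (hx0sa.add hFF)
  set Φ : s → s := fun F =>
    ⟨(2⁻¹ : ℝ) • (x0 + (F : E →L[ℝ] E) * (F : E →L[ℝ] E)), hΦmem F⟩ with hΦdef
  have hcontr : ContractingWith ⟨q, hq0⟩ Φ := by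
    constructor
    · exact_mod_cast hq1
    · refine LipschitzWith.of_dist_le_mul fun F₁ F₂ => ?_
      simp only [Subtype.dist_eq, dist_eq_norm]
      have hdiff : (Φ F₁ : E →L[ℝ] E) - (Φ F₂ : E →L[ℝ] E)
          = (2⁻¹ : ℝ) • ((F₁ : E →L[ℝ] E) * ((F₁ : E →L[ℝ] E) - F₂)
            + ((F₁ : E →L[ℝ] E) - F₂) * F₂) := by
        show (2⁻¹ : ℝ) • (x0 + (F₁ : E →L[ℝ] E) * F₁) -
          (2⁻¹ : ℝ) • (x0 + (F₂ : E →L[ℝ] E) * F₂) = _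
        rw [← smul_sub]
        congr 1
        noncomm_ring
      rw [hdiff, hnorm_smul_half]
      have hm1 := norm_mul_le (F₁ : E →L[ℝ] E) ((F₁ : E →L[ℝ] E) - F₂)
      have hm2 := norm_mul_le ((F₁ : E →L[ℝ] E) - F₂) (F₂ : E →L[ℝ] E)
      have h1 := norm_add_le ((F₁ : E →L[ℝ] E) * ((F₁ : E →L[ℝ] E) - F₂))
        (((F₁ : E →L[ℝ] E) - F₂) * F₂)
      have hF₁ := hmem F₁
      have hF₂ := hmem F₂
      have hd : (0:ℝ) ≤ ‖(F₁ : E →L[ℝ] E) - F₂‖ := norm_nonneg _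
      push_cast
      change _ ≤ q * _
      nlinarith [norm_nonneg ((F₁ : E →L[ℝ] E) - F₂), norm_nonneg (F₁ : E →L[ℝ] E),
        norm_nonneg (F₂ : E →L[ℝ] E)]
  obtain ⟨Efix, hfixpt, -⟩ := hcontr.exists_fixedPoint (Classical.arbitrary s)
    (edist_ne_top _ _)
  have hfixval : (2⁻¹ : ℝ) • (x0 + (Efix : E →L[ℝ] E) * (Efix : E →L[ℝ] E))
      = (Efix : E →L[ℝ] E) := congrArg Subtype.val hfixpt
  obtain ⟨E0, hE0n, hE0sa⟩ := Efix
  simp only at hfixval hE0sa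
  have h2E : x0 + E0 * E0 = (2:ℝ) • E0 := by
    have h := congrArg (fun z : E →L[ℝ] E => (2:ℝ) • z) hfixval
    simp only [smul_smul] at h
    norm_num at h
    exact h
  have hSS : (1 - E0) * (1 - E0) = 1 - x0 := by
    have expand : (1 - E0) * (1 - E0) = 1 - (E0 + E0) + E0 * E0 := by noncomm_ring
    rw [expand, ← two_smul ℝ E0, ← h2E]
    abel
  refine ⟨Real.sqrt t • (1 - E0), ?_, ?_⟩
  · exact IsSelfAdjoint.smul (star_trivial _) ((IsSelfAdjoint.one (E →L[ℝ] E)).sub hE0sa)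
  · have h1 : (Real.sqrt t • (1 - E0)) * (Real.sqrt t • (1 - E0))
        = (Real.sqrt t * Real.sqrt t) • ((1 - E0) * (1 - E0)) := by
      rw [smul_mul_assoc, mul_smul_comm, smul_smul]
    rw [h1, Real.mul_self_sqrt ht0.le, hSS]
    have h2 : (1 : E →L[ℝ] E) - x0 = a := by rw [hx0def]; abel
    rw [h2, ha, smul_smul, mul_inv_cancel₀ ht0.ne', one_smul]


end auxvarsec

/-- A Hilbert space operator factors as an invertible operator times a partial isometry iff it
has closed range. -/
theorem stmt13 {H : Type*} [NormedAddCommGroup H] [InnerProductSpace ℝ H] [CompleteSpace H]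
    (T : H →L[ℝ] H) :
    (∃ Xop Yop : H →L[ℝ] H,
      (∃ Xop' : H →L[ℝ] H, Xop.comp Xop' = ContinuousLinearMap.id ℝ H ∧
        Xop'.comp Xop = ContinuousLinearMap.id ℝ H) ∧
      (∀ v ∈ (LinearMap.ker (Yop : H →ₗ[ℝ] H))ᗮ, ‖Yop v‖ = ‖v‖) ∧
      T = Xop.comp Yop) ↔
    IsClosed (Set.range T) := by
  constructor
  · rintro ⟨Xop, Yop, ⟨Xop', hXX', hX'X⟩, hYiso, rfl⟩
    have hXX'app : ∀ x, Xop (Xop' x) = x := fun x => by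
      have h := ContinuousLinearMap.ext_iff.mp hXX' x
      simpa using h
    have hX'Xapp : ∀ x, Xop' (Xop x) = x := fun x => by
      have h := ContinuousLinearMap.ext_iff.mp hX'X x
      simpa using h
    set K' : Submodule ℝ H := (LinearMap.ker (Yop : H →ₗ[ℝ] H))ᗮ with hK'
    haveI : CompleteSpace K' := (LinearMap.ker (Yop : H →ₗ[ℝ] H)).isClosed_orthogonal.completeSpace_coe
    haveI : CompleteSpace (LinearMap.ker (Yop : H →ₗ[ℝ] H)) :=
      (ContinuousLinearMap.isClosed_ker Yop).completeSpace_coe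
    have hrangeY : Set.range ⇑Yop = ⇑Yop '' (K' : Set H) := by
      apply Set.Subset.antisymm
      · rintro _ ⟨x, rfl⟩
        obtain ⟨y, hy, z, hz, rfl⟩ := (LinearMap.ker (Yop : H →ₗ[ℝ] H)).exists_add_mem_mem_orthogonal x
        refine ⟨z, hz, ?_⟩
        rw [map_add, show Yop y = 0 from LinearMap.mem_ker.mp hy, zero_add]
      · rintro _ ⟨x, _, rfl⟩
        exact ⟨x, rfl⟩
    set J : K' →ₗᵢ[ℝ] H := ⟨(Yop.comp K'.subtypeL).toLinearMap, fun x => hYiso x x.2⟩ with hJ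
    have hJrange : Set.range ⇑J = ⇑Yop '' (K' : Set H) := by
      ext z
      constructor
      · rintro ⟨⟨x, hx⟩, rfl⟩
        exact ⟨x, hx, rfl⟩
      · rintro ⟨x, hx, rfl⟩
        exact ⟨⟨x, hx⟩, rfl⟩
    have hclosedY : IsClosed (Set.range ⇑Yop) := by
      rw [hrangeY, ← hJrange]
      exact J.isometry.isClosedEmbedding.isClosed_range
    have hrangeT : Set.range ⇑(Xop.comp Yop) = ⇑Xop' ⁻¹' (Set.range ⇑Yop) := by
      ext z
      simp only [Set.mem_range, Set.mem_preimage, ContinuousLinearMap.comp_apply]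
      constructor
      · rintro ⟨x, rfl⟩
        exact ⟨x, (hX'Xapp _).symm⟩
      · rintro ⟨x, hx⟩
        refine ⟨x, ?_⟩
        rw [hx, hXX'app]
    rw [hrangeT]
    exact hclosedY.preimage Xop'.continuous
  · intro hclosed
    set N : Submodule ℝ H := LinearMap.ker (T : H →ₗ[ℝ] H) with hN
    set K : Submodule ℝ H := Nᗮ with hK
    set R : Submodule ℝ H := LinearMap.range (T : H →ₗ[ℝ] H) with hR
    have hNclosed : IsClosed (N : Set H) := ContinuousLinearMap.isClosed_ker T
    have hKclosed : IsClosed (K : Set H) := N.isClosed_orthogonal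
    have hRset : (R : Set H) = Set.range ⇑T := by
      ext x
      simp [hR, LinearMap.mem_range]
    have hRclosed : IsClosed (R : Set H) := by rw [hRset]; exact hclosed
    haveI : CompleteSpace N := hNclosed.completeSpace_coe
    haveI : CompleteSpace K := hKclosed.completeSpace_coe
    haveI : CompleteSpace R := hRclosed.completeSpace_coe
    have hKperp : Kᗮ = N := by rw [hK, Submodule.orthogonal_orthogonal]
    have hmem1 : ∀ x : K, T (x : H) ∈ R := fun x => LinearMap.mem_range_self _ _
    set T₁ : K →L[ℝ] R := (T.comp K.subtypeL).codRestrict R (fun x => hmem1 x) with hT₁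
    have hT₁app : ∀ x : K, (T₁ x : H) = T (x : H) := fun x => rfl
    have hker : LinearMap.ker (T₁ : K →ₗ[ℝ] R) = ⊥ := by
      rw [Submodule.eq_bot_iff]
      intro x hx
      have h1 : T (x : H) = 0 := by
        have := congrArg (Subtype.val) (LinearMap.mem_ker.mp hx)
        simpa [hT₁app] using this
      have h2 : (x : H) ∈ N := LinearMap.mem_ker.mpr h1
      have h3 : (x : H) ∈ Nᗮ := x.2
      have h4 : ⟪(x : H), (x : H)⟫ = 0 :=
        (Submodule.mem_orthogonal N (x : H)).mp h3 (x : H) h2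
      exact Subtype.ext (inner_self_eq_zero.mp h4)
    have hrange : LinearMap.range (T₁ : K →ₗ[ℝ] R) = ⊤ := by
      rw [Submodule.eq_top_iff']
      intro y
      obtain ⟨x, hx⟩ := y.2
      obtain ⟨b, hb, z, hz, hxeq⟩ := K.exists_add_mem_mem_orthogonal x
      have hzN : z ∈ N := by rwa [hK, Submodule.orthogonal_orthogonal] at hz
      refine ⟨⟨b, hb⟩, Subtype.ext ?_⟩
      have hTz : T z = 0 := LinearMap.mem_ker.mp hzN
      have : T x = T b := by rw [hxeq, map_add, hTz, add_zero]
      rw [ContinuousLinearMap.coe_coe, hT₁app]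
      rw [← this]; exact hx
    set T₁e : K ≃L[ℝ] R := ContinuousLinearEquiv.ofBijective T₁ hker hrange with hT₁e
    have hT₁eapp : ∀ x : K, T₁e x = T₁ x := fun x => rfl
    set M : ℝ := ‖(T₁e.symm : R →L[ℝ] K)‖ + 1 with hM
    have hM0 : (0:ℝ) < M := by positivity
    have hlow : ∀ x : K, ‖x‖ ≤ M * ‖T₁ x‖ := by
      intro x
      have h1 : T₁e.symm (T₁e x) = x := T₁e.symm_apply_apply x
      calc ‖x‖ = ‖T₁e.symm (T₁e x)‖ := by rw [h1]
        _ ≤ ‖(T₁e.symm : R →L[ℝ] K)‖ * ‖T₁e x‖ :=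
            (T₁e.symm : R →L[ℝ] K).le_opNorm (T₁e x)
        _ ≤ M * ‖T₁ x‖ := by
            rw [hT₁eapp]
            have := norm_nonneg (T₁ x)
            have h2 : ‖(T₁e.symm : R →L[ℝ] K)‖ ≤ M := by rw [hM]; linarith
            nlinarith [norm_nonneg (T₁e.symm : R →L[ℝ] K)]
    set G : K →L[ℝ] K := ContinuousLinearMap.adjoint T₁ ∘L T₁ with hG
    have hGsa : IsSelfAdjoint G := by
      rw [ContinuousLinearMap.isSelfAdjoint_iff']
      rw [hG, ContinuousLinearMap.adjoint_comp, ContinuousLinearMap.adjoint_adjoint]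
    have hGform : ∀ x : K, ⟪G x, x⟫ = ‖T₁ x‖ ^ 2 := by
      intro x
      rw [hG, ContinuousLinearMap.comp_apply, ContinuousLinearMap.adjoint_inner_left,
        real_inner_self_eq_norm_sq]
    set c : ℝ := (M ^ 2)⁻¹ with hc
    have hc0 : (0:ℝ) < c := by positivity
    have hco : ∀ x : K, c * ‖x‖ ^ 2 ≤ ⟪G x, x⟫ := by
      intro x
      rw [hGform]
      have h1 := hlow x
      have hMc : c * M ^ 2 = 1 := inv_mul_cancel₀ (by positivity)
      have h2 : ‖x‖ ^ 2 ≤ M ^ 2 * ‖T₁ x‖ ^ 2 := by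
        nlinarith [norm_nonneg (T₁ x), norm_nonneg x]
      have h3 : c * ‖x‖ ^ 2 ≤ c * (M ^ 2 * ‖T₁ x‖ ^ 2) :=
        mul_le_mul_of_nonneg_left h2 hc0.le
      calc c * ‖x‖ ^ 2 ≤ c * (M ^ 2 * ‖T₁ x‖ ^ 2) := h3
        _ = (c * M ^ 2) * ‖T₁ x‖ ^ 2 := by ring
        _ = ‖T₁ x‖ ^ 2 := by rw [hMc, one_mul]
    obtain ⟨B, hBsa, hBB⟩ := exists_sa_sq_eq G hGsa hc0 hco
    have hGunit : IsUnit G := by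
      refine isUnit_of_forall_le_norm_inner_map G (c := ⟨c, hc0.le⟩) ?_ ?_
      · exact_mod_cast hc0
      · intro x
        have h1 := hco x
        rw [Real.norm_eq_abs]
        calc ‖x‖ ^ 2 * (⟨c, hc0.le⟩ : NNReal) = c * ‖x‖ ^ 2 := by push_cast; ring
          _ ≤ ⟪G x, x⟫ := h1
          _ ≤ |⟪G x, x⟫| := le_abs_self _
    obtain ⟨u, hu⟩ := hGunit
    set rB : K →L[ℝ] K := B * ↑u⁻¹ with hrB
    have hBr : B * rB = 1 := by
      calc B * (B * ↑u⁻¹) = (B * B) * ↑u⁻¹ := (mul_assoc _ _ _).symm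
        _ = G * ↑u⁻¹ := by rw [hBB]
        _ = 1 := by rw [← hu]; exact_mod_cast u.mul_inv
    have hlB : (↑u⁻¹ * B) * B = 1 := by
      rw [mul_assoc, hBB, ← hu]
      exact_mod_cast u.inv_mul
    have hrBB : rB * B = 1 := by
      have heq : (↑u⁻¹ * B : K →L[ℝ] K) = rB := by
        calc (↑u⁻¹ * B : K →L[ℝ] K) = (↑u⁻¹ * B) * (B * rB) := by rw [hBr, mul_one]
          _ = ((↑u⁻¹ * B) * B) * rB := (mul_assoc _ _ _).symm
          _ = rB := by rw [hlB, one_mul]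
      rw [← heq]
      exact hlB
    set Be : K ≃L[ℝ] K := ContinuousLinearEquiv.equivOfInverse B rB
      (fun x => by rw [← ContinuousLinearMap.mul_apply, hrBB, ContinuousLinearMap.one_apply])
      (fun x => by rw [← ContinuousLinearMap.mul_apply, hBr, ContinuousLinearMap.one_apply])
      with hBe
    have hBeapp : ∀ x : K, Be x = B x := fun x => rfl
    set Ve : K ≃L[ℝ] R := Be.symm.trans T₁e with hVe
    have hVeiso : ∀ y : K, ‖Ve y‖ = ‖y‖ := by
      intro y
      have hBz : B (Be.symm y) = y := by
        rw [← hBeapp]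
        exact Be.apply_symm_apply y
      have h1 : Ve y = T₁ (Be.symm y) := rfl
      have h2 : ‖T₁ (Be.symm y)‖ ^ 2 = ‖y‖ ^ 2 := by
        rw [← hGform]
        have hGz : G (Be.symm y) = B (B (Be.symm y)) := by
          rw [← hBB, ContinuousLinearMap.mul_apply]
        rw [hGz, hBz]
        have h3 := hBsa.isSymmetric y (Be.symm y)
        calc ⟪B y, Be.symm y⟫ = ⟪y, B (Be.symm y)⟫ := hBsa.isSymmetric y (Be.symm y)
          _ = ⟪y, y⟫ := by rw [hBz]
          _ = ‖y‖ ^ 2 := real_inner_self_eq_norm_sq y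
      rw [h1]
      have h4 : ‖T₁ (Be.symm y)‖ = ‖y‖ := by
        have := congrArg Real.sqrt h2
        rwa [Real.sqrt_sq (norm_nonneg _), Real.sqrt_sq (norm_nonneg _)] at this
      exact h4
    set P : H →L[ℝ] K := Submodule.orthogonalProjectionOnto K with hP
    set Q : H →L[ℝ] R := Submodule.orthogonalProjectionOnto R with hQ
    set Yop : H →L[ℝ] H := R.subtypeL ∘L ((Ve : K →L[ℝ] R) ∘L P) with hYop
    have hYopapp : ∀ x, Yop x = (Ve (P x) : H) := fun x => rfl
    have hkerY : LinearMap.ker (Yop : H →ₗ[ℝ] H) = N := by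
      ext x
      simp only [LinearMap.mem_ker, ContinuousLinearMap.coe_coe]
      constructor
      · intro hx
        have h1 : (Ve (P x) : H) = 0 := by rw [← hYopapp]; exact hx
        have h2 : Ve (P x) = 0 := by exact_mod_cast h1
        have h3 : P x = 0 := Ve.map_eq_zero_iff.mp h2
        have h4 : x ∈ Kᗮ := Submodule.orthogonalProjectionOnto_eq_zero_iff.mp h3
        rwa [hK, Submodule.orthogonal_orthogonal] at h4
      · intro hx
        have h4 : x ∈ Kᗮ := by rw [hK, Submodule.orthogonal_orthogonal]; exact hx
        have h3 : P x = 0 := Submodule.orthogonalProjectionOnto_eq_zero_iff.mpr h4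
        rw [hYopapp, h3]
        simp
    have hQcoe : ∀ y : R, Q (y : H) = y := fun y => Submodule.orthogonalProjectionOnto_mem_subspace_eq_self y
    set W : R ≃L[ℝ] R := Ve.symm.trans T₁e with hW
    set Xop : H →L[ℝ] H :=
      R.subtypeL ∘L ((W : R →L[ℝ] R) ∘L Q) + (ContinuousLinearMap.id ℝ H - R.subtypeL ∘L Q)
      with hXop
    set Xop' : H →L[ℝ] H :=
      R.subtypeL ∘L ((W.symm : R →L[ℝ] R) ∘L Q) + (ContinuousLinearMap.id ℝ H - R.subtypeL ∘L Q)
      with hXop'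
    have key : ∀ (A A' : R ≃L[ℝ] R), (∀ u : R, A' (A u) = u) → ∀ x : H,
        (R.subtypeL ∘L ((A' : R →L[ℝ] R) ∘L Q) + (ContinuousLinearMap.id ℝ H - R.subtypeL ∘L Q))
          ((R.subtypeL ∘L ((A : R →L[ℝ] R) ∘L Q)
            + (ContinuousLinearMap.id ℝ H - R.subtypeL ∘L Q)) x) = x := by
      intro A A' hAA x
      simp only [ContinuousLinearMap.add_apply, ContinuousLinearMap.comp_apply,
        ContinuousLinearMap.sub_apply, ContinuousLinearMap.id_apply,
        ContinuousLinearEquiv.coe_coe, Submodule.subtypeL_apply]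
      have hxq : Q (x - ↑(Q x)) = 0 :=
        Submodule.orthogonalProjectionOnto_apply_of_mem_orthogonal
          (Submodule.sub_starProjection_mem_orthogonal (K := R) x)
      have hQy : Q ((↑(A (Q x)) : H) + (x - ↑(Q x))) = A (Q x) := by
        rw [map_add, hQcoe, hxq, add_zero]
      rw [hQy, hAA]
      push_cast
      abel
    refine ⟨Xop, Yop, ⟨Xop', ?_, ?_⟩, ?_, ?_⟩
    · ext x
      simp only [ContinuousLinearMap.comp_apply, ContinuousLinearMap.id_apply]
      exact key W.symm W (fun u => W.apply_symm_apply u) x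
    · ext x
      simp only [ContinuousLinearMap.comp_apply, ContinuousLinearMap.id_apply]
      exact key W W.symm (fun u => W.symm_apply_apply u) x
    · intro v hv
      rw [hkerY, ← hK] at hv
      have h1 : P v = ⟨v, hv⟩ := by
        rw [hP]
        exact Submodule.orthogonalProjectionOnto_mem_subspace_eq_self (⟨v, hv⟩ : K)
      rw [hYopapp, h1]
      have h2 : ‖(Ve ⟨v, hv⟩ : H)‖ = ‖Ve (⟨v, hv⟩ : K)‖ := rfl
      rw [h2, hVeiso]
      rfl
    · ext x
      have h1 : Yop x = ((Ve (P x) : R) : H) := rfl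
      have h2 : Q (Yop x) = Ve (P x) := by rw [h1, hQcoe]
      have h3 : Xop (Yop x) = ↑(W (Q (Yop x))) + (Yop x - ↑(Q (Yop x))) := by
        simp only [hXop, ContinuousLinearMap.add_apply, ContinuousLinearMap.comp_apply,
          ContinuousLinearMap.sub_apply, ContinuousLinearMap.id_apply,
          ContinuousLinearEquiv.coe_coe, Submodule.subtypeL_apply]
      have h4 : W (Ve (P x)) = T₁e (P x) := by
        rw [hW]
        simp only [ContinuousLinearEquiv.trans_apply, ContinuousLinearEquiv.symm_apply_apply]
      have h5 : (T₁e (P x) : H) = T ↑(P x) := rfl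
      have h6 : T ↑(P x) = T x := by
        have h7 : x - ↑(P x) ∈ Kᗮ := Submodule.sub_starProjection_mem_orthogonal (K := K) x
        have h8 : x - ↑(P x) ∈ N := by rwa [hKperp] at h7
        have h9 : T (x - ↑(P x)) = 0 := LinearMap.mem_ker.mp h8
        rw [map_sub, sub_eq_zero] at h9
        exact h9.symm
      show T x = Xop (Yop x)
      rw [h3, h2, h4, h1]
      rw [sub_self, add_zero, h5, h6]
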